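/- arXiv:1811.10010 — 2 statements merged into one kernel-verified Lean document; each statement's English description precedes it below -/
import Mathlib

section
/- Let f : ℕ → ℕ be defined by f(1) = f(2) = f(3) = 1 and f(i) = f(i-1) + f(i-2) for i ≥ 4. Let m ≥ 0 be an integer, r = m + 6, λ = 2^{m+1} − 1, and let ω_1, …, ω_s, ω_{s+1} (s ≥ 0) be integers with 1 ≤ ω_t ≤ λ − 1 for all t and ∑_{t=1}^{s+1} ω_t ≤ 2λ. Then the minimum of ∑_{i=1}^{2r} f(i) − ∑_{i=1}^{2r+1} f(i)·x_i − (λ+4)·u − (λ+2)·v − ∑_{t=1}^{s} ω_t·y_t over all x ∈ {0,1}^{2r+1}, u, v ∈ {0,1}, y ∈ {0,1}^s satisfying ∑_{i=1}^{2r+1} λ·f(i)·x_i + (λ(λ+3)+1)·u + (λ(λ+3)−1)·v + ∑_{t=1}^{s} ω_t·(λ+1)·y_t ≤ λ·∑_{i=1}^{2r} f(i) − ω_{s+1}·(λ+1) equals ω_{s+1}. -/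
open Finset

lemma sum_bound' (f : ℕ → ℕ) (hrec : ∀ i, 4 ≤ i → f i = f (i - 1) + f (i - 2))
    (n : ℕ) (hn : 3 ≤ n) : f (n + 1) ≤ ∑ i ∈ Icc 1 n, f i := by
  have h := hrec (n + 1) (by omega)
  have h1 : n + 1 - 1 = n := by omega
  have h2 : n + 1 - 2 = n - 1 := by omega
  rw [h1, h2] at h
  have hne : n - 1 ≠ n := by omega
  have hsub : ({n - 1, n} : Finset ℕ) ⊆ Icc 1 n := by
    intro i hi
    simp only [mem_insert, mem_singleton] at hi
    rw [mem_Icc]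
    omega
  calc f (n + 1) = f (n - 1) + f n := by omega
    _ = ∑ i ∈ ({n - 1, n} : Finset ℕ), f i := by
        rw [Finset.sum_insert (by simpa using hne), Finset.sum_singleton]
    _ ≤ ∑ i ∈ Icc 1 n, f i := Finset.sum_le_sum_of_subset hsub

lemma complete' (f : ℕ → ℕ) (hf1 : f 1 = 1) (hf2 : f 2 = 1) (hf3 : f 3 = 1)
    (hrec : ∀ i, 4 ≤ i → f i = f (i - 1) + f (i - 2)) :
    ∀ n T, T ≤ ∑ i ∈ Icc 1 n, f i →
      ∃ x : ℕ → ℕ, (∀ i, x i = 0 ∨ x i = 1) ∧ ∑ i ∈ Icc 1 n, f i * x i = T := by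
  intro n
  induction n with
  | zero =>
    intro T hT
    simp only [show Icc 1 0 = (∅ : Finset ℕ) from rfl, Finset.sum_empty] at hT ⊢
    exact ⟨fun _ => 0, fun _ => Or.inl rfl, by omega⟩
  | succ n ih =>
    intro T hT
    rw [Finset.sum_Icc_succ_top (by omega)] at hT
    by_cases hc : f (n + 1) ≤ T
    · obtain ⟨x, hx01, hxs⟩ := ih (T - f (n + 1)) (by omega)
      refine ⟨fun i => if i = n + 1 then 1 else x i, ?_, ?_⟩
      · intro i; by_cases h : i = n + 1 <;> simp [h, hx01 i]
      · have hcg : ∑ i ∈ Icc 1 n, f i * (if i = n + 1 then 1 else x i)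
            = ∑ i ∈ Icc 1 n, f i * x i := by
          apply Finset.sum_congr rfl
          intro i hi
          rw [mem_Icc] at hi
          rw [if_neg (by omega)]
        rw [Finset.sum_Icc_succ_top (by omega), hcg, hxs]
        simp only [if_true]
        omega
    · have hT' : T ≤ ∑ i ∈ Icc 1 n, f i := by
        rcases Nat.lt_or_ge n 3 with h3 | h3
        · have hfn : f (n + 1) = 1 := by interval_cases n <;> assumption
          omega
        · have := sum_bound' f hrec n h3; omega
      obtain ⟨x, hx01, hxs⟩ := ih T hT'
      refine ⟨fun i => if i = n + 1 then 0 else x i, ?_, ?_⟩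
      · intro i; by_cases h : i = n + 1 <;> simp [h, hx01 i]
      · have hcg : ∑ i ∈ Icc 1 n, f i * (if i = n + 1 then 0 else x i)
            = ∑ i ∈ Icc 1 n, f i * x i := by
          apply Finset.sum_congr rfl
          intro i hi
          rw [mem_Icc] at hi
          rw [if_neg (by omega)]
        rw [Finset.sum_Icc_succ_top (by omega), hcg, hxs]
        simp only [if_true]
        omega

lemma growth' (f : ℕ → ℕ) (hf1 : f 1 = 1) (hf2 : f 2 = 1) (hf3 : f 3 = 1)
    (hrec : ∀ i, 4 ≤ i → f i = f (i - 1) + f (i - 2)) :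
    ∀ k, 2 ^ (k + 2) + 2 ≤ f (2 * k + 13) := by
  have e2 : ∀ j, f (j + 4) = f (j + 3) + f (j + 2) := by
    intro j
    have h := hrec (j + 4) (by omega)
    have h1 : j + 4 - 1 = j + 3 := by omega
    have h2 : j + 4 - 2 = j + 2 := by omega
    rw [h1, h2] at h
    exact h
  intro k
  induction k with
  | zero =>
    have h4 := e2 0; have h5 := e2 1; have h6 := e2 2; have h7 := e2 3
    have h8 := e2 4; have h9 := e2 5; have h10 := e2 6; have h11 := e2 7
    have h12 := e2 8; have h13 := e2 9
    norm_num at h4 h5 h6 h7 h8 h9 h10 h11 h12 h13 ⊢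
    omega
  | succ k ih =>
    have hidx : 2 * (k + 1) + 13 = (2 * k + 11) + 4 := by ring
    rw [hidx]
    have a := e2 (2 * k + 11)
    have b := e2 (2 * k + 10)
    have e1 : 2 * k + 11 + 3 = 2 * k + 10 + 4 := by ring
    have e3 : 2 * k + 10 + 3 = 2 * k + 13 := by ring
    have e4 : 2 * k + 11 + 2 = 2 * k + 13 := by ring
    rw [e1] at a
    rw [e3] at b
    rw [e4] at a
    have hP : 2 ^ (k + 1 + 2) = 2 * 2 ^ (k + 2) := by rw [pow_succ]; ring
    omega

/-- Induction step for lifting the variables with weights `ω` in the NP-hardness construction: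
with weights `ω 1, …, ω (s+1)` satisfying `1 ≤ ω t ≤ λ − 1` and `∑_{t=1}^{s+1} ω t ≤ 2λ`,
the minimum of
`∑_{i=1}^{2r} f i − ∑_{i=1}^{2r+1} f i x i − (λ+4)u − (λ+2)v − ∑_{t=1}^{s} ω t · y t`
subject to the corresponding knapsack constraint equals `ω (s+1)`. -/
theorem stmt_11 (f : ℕ → ℕ) (hf1 : f 1 = 1) (hf2 : f 2 = 1) (hf3 : f 3 = 1)
    (hrec : ∀ i, 4 ≤ i → f i = f (i - 1) + f (i - 2))
    (m r : ℕ) (hr : r = m + 6) (lam : ℤ) (hlam : lam = 2 ^ (m + 1) - 1)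
    (s : ℕ) (ω : ℕ → ℤ)
    (hω : ∀ t ∈ Finset.Icc 1 (s + 1), 1 ≤ ω t ∧ ω t ≤ lam - 1)
    (hωsum : (∑ t ∈ Finset.Icc 1 (s + 1), ω t) ≤ 2 * lam) :
    IsLeast {g : ℤ | ∃ x : ℕ → ℕ, ∃ u v : ℕ, ∃ y : ℕ → ℕ,
      (∀ i ∈ Finset.Icc 1 (2 * r + 1), x i = 0 ∨ x i = 1) ∧
      (u = 0 ∨ u = 1) ∧ (v = 0 ∨ v = 1) ∧
      (∀ t ∈ Finset.Icc 1 s, y t = 0 ∨ y t = 1) ∧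
      (∑ i ∈ Finset.Icc 1 (2 * r + 1), lam * (f i : ℤ) * (x i : ℤ)) +
          (lam * (lam + 3) + 1) * (u : ℤ) + (lam * (lam + 3) - 1) * (v : ℤ) +
          (∑ t ∈ Finset.Icc 1 s, ω t * (lam + 1) * (y t : ℤ)) ≤
        lam * (∑ i ∈ Finset.Icc 1 (2 * r), (f i : ℤ)) - ω (s + 1) * (lam + 1) ∧
      g = (∑ i ∈ Finset.Icc 1 (2 * r), (f i : ℤ)) -
          (∑ i ∈ Finset.Icc 1 (2 * r + 1), (f i : ℤ) * (x i : ℤ)) -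
          (lam + 4) * (u : ℤ) - (lam + 2) * (v : ℤ) -
          ∑ t ∈ Finset.Icc 1 s, ω t * (y t : ℤ)}
      (ω (s + 1)) := by
  have hωs1 := hω (s + 1) (Finset.mem_Icc.mpr ⟨by omega, le_refl _⟩)
  have hlam1 : 1 ≤ lam := by
    have h2 : (2:ℕ) ≤ 2 ^ (m + 1) := by
      calc (2:ℕ) = 2 ^ 1 := by norm_num
        _ ≤ 2 ^ (m + 1) := Nat.pow_le_pow_right (by norm_num) (by omega)
    have h2' : (2:ℤ) ≤ 2 ^ (m + 1) := by exact_mod_cast h2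
    omega
  set Fn : ℕ := ∑ i ∈ Finset.Icc 1 (2 * r), f i with hFn
  have hFZ : ((Fn : ℤ)) = ∑ i ∈ Finset.Icc 1 (2 * r), (f i : ℤ) := by
    rw [hFn]; push_cast; rfl
  have hgrow : 2 ^ (m + 2) + 2 ≤ f (2 * m + 13) := growth' f hf1 hf2 hf3 hrec m
  have h2r1 : 2 * r + 1 = 2 * m + 13 := by omega
  rw [← h2r1] at hgrow
  have hsb : f (2 * r + 1) ≤ Fn := sum_bound' f hrec (2 * r) (by omega)
  have hFnbig : 2 ^ (m + 2) + 2 ≤ Fn := le_trans hgrow hsb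
  have hFnZ : (2:ℤ) * lam + 4 ≤ (Fn : ℤ) := by
    have h1 : ((2 ^ (m + 2) + 2 : ℕ) : ℤ) ≤ (Fn : ℤ) := by exact_mod_cast hFnbig
    have h2 : ((2:ℤ)) ^ (m + 2) = 2 * (lam + 1) := by rw [hlam, pow_succ]; ring
    push_cast at h1
    omega
  constructor
  · -- membership
    have hknn : (0:ℤ) ≤ (Fn : ℤ) - (lam + 4 + ω (s + 1)) := by linarith [hωs1.1, hωs1.2]
    set k : ℕ := ((Fn : ℤ) - (lam + 4 + ω (s + 1))).toNat with hkdef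
    have hk : (k : ℤ) = (Fn : ℤ) - (lam + 4 + ω (s + 1)) := Int.toNat_of_nonneg hknn
    have hkle : k ≤ Fn := by
      have : (k:ℤ) ≤ (Fn:ℤ) := by linarith [hωs1.1]
      exact_mod_cast this
    obtain ⟨x, hx01, hxsum⟩ := complete' f hf1 hf2 hf3 hrec (2 * r) k hkle
    have hXsum : ∑ i ∈ Finset.Icc 1 (2 * r + 1),
        f i * (if i = 2 * r + 1 then 0 else x i) = k := by
      have hcg : ∑ i ∈ Finset.Icc 1 (2 * r),
          f i * (if i = 2 * r + 1 then 0 else x i)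
          = ∑ i ∈ Finset.Icc 1 (2 * r), f i * x i := by
        apply Finset.sum_congr rfl
        intro i hi
        rw [Finset.mem_Icc] at hi
        rw [if_neg (by omega)]
      rw [Finset.sum_Icc_succ_top (by omega), hcg, hxsum]
      simp only [if_true]
      omega
    have hXZ : ∑ i ∈ Finset.Icc 1 (2 * r + 1),
        (f i : ℤ) * (((if i = 2 * r + 1 then 0 else x i) : ℕ) : ℤ) = (k : ℤ) := by
      have h := congrArg (fun n : ℕ => (n : ℤ)) hXsum
      push_cast at h
      rw [← h]
      apply Finset.sum_congr rfl
      intro i _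
      split <;> simp
    have hlamX : ∑ i ∈ Finset.Icc 1 (2 * r + 1),
        lam * (f i : ℤ) * (((if i = 2 * r + 1 then 0 else x i) : ℕ) : ℤ)
        = lam * (k : ℤ) := by
      rw [← hXZ, Finset.mul_sum]
      apply Finset.sum_congr rfl
      intro i _
      ring
    refine ⟨fun i => if i = 2 * r + 1 then 0 else x i, 1, 0, fun _ => 0, ?_, Or.inr rfl,
      Or.inl rfl, fun t _ => Or.inl rfl, ?_, ?_⟩
    · intro i _
      by_cases h : i = 2 * r + 1 <;> simp [h, hx01 i]
    · -- constraint
      simp only []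
      rw [hlamX, ← hFZ]
      push_cast
      have hz : ∑ t ∈ Finset.Icc 1 s, ω t * (lam + 1) * (0:ℤ) = 0 := by simp
      rw [hz]
      have hkey : lam * (k : ℤ) =
          lam * (Fn : ℤ) - lam * lam - 4 * lam - lam * ω (s + 1) := by
        rw [hk]; ring
      linarith [hωs1.2, hkey]
    · -- objective value
      simp only []
      rw [hXZ, ← hFZ]
      push_cast
      have hz : ∑ t ∈ Finset.Icc 1 s, ω t * (0:ℤ) = 0 := by simp
      rw [hz]
      linarith [hk]
  · -- lower bound
    rintro g ⟨x, u, v, y, hx, hu, hv, hy, hcon, hg⟩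
    rw [← hFZ] at hcon hg
    set B : ℤ := ∑ i ∈ Finset.Icc 1 (2 * r + 1), (f i : ℤ) * (x i : ℤ) with hB
    set S : ℤ := ∑ t ∈ Finset.Icc 1 s, ω t * (y t : ℤ) with hS
    have hA : ∑ i ∈ Finset.Icc 1 (2 * r + 1), lam * (f i : ℤ) * (x i : ℤ)
        = lam * B := by
      rw [hB, Finset.mul_sum]
      apply Finset.sum_congr rfl
      intro i _
      ring
    have hSc : ∑ t ∈ Finset.Icc 1 s, ω t * (lam + 1) * (y t : ℤ)
        = (lam + 1) * S := by
      rw [hS, Finset.mul_sum]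
      apply Finset.sum_congr rfl
      intro t _
      ring
    rw [hA, hSc] at hcon
    have hS0 : 0 ≤ S := by
      rw [hS]
      apply Finset.sum_nonneg
      intro t ht
      have ht' : t ∈ Finset.Icc 1 (s + 1) := by
        rw [Finset.mem_Icc] at ht ⊢; omega
      exact mul_nonneg (by linarith [(hω t ht').1]) (Int.natCast_nonneg _)
    have hu1 : (u : ℤ) ≤ 1 := by rcases hu with h | h <;> simp [h]
    have hv0 : (0:ℤ) ≤ (v : ℤ) := Int.natCast_nonneg _
    by_contra hcontra
    push_neg at hcontra
    have hgle : g ≤ ω (s + 1) - 1 := by omega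
    have hgl : lam * g = lam * (Fn : ℤ) - lam * B - lam * (lam + 4) * (u : ℤ)
        - lam * (lam + 2) * (v : ℤ) - lam * S := by
      rw [hg]; ring
    have hp1 : (0:ℤ) ≤ (lam - 1) * (1 - (u : ℤ)) :=
      mul_nonneg (by linarith) (by linarith)
    have hp2 : (0:ℤ) ≤ (lam - 1) * (v : ℤ) := mul_nonneg (by linarith) hv0
    have hp3 : lam * g ≤ lam * (ω (s + 1) - 1) :=
      mul_le_mul_of_nonneg_left hgle (by linarith)
    linarith [hωs1.1, hgl, hp1, hp2, hp3, hS0, hcon]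
end

section
/- Let f : ℕ → ℕ be defined by f(1) = f(2) = f(3) = 1 and f(i) = f(i-1) + f(i-2) for i ≥ 4. Let m ≥ 0 be an integer, r = m + 6, λ = 2^{m+1} − 1, and let ω_1, …, ω_k be integers with 1 ≤ ω_t ≤ λ − 1 for all t and ∑_{t=1}^{k} ω_t = 2λ. Let M be the maximum of ∑_{i=1}^{2r+1} f(i)·x_i + ∑_{t=1}^{k} ω_t·y_t + 2λ + 6 − ∑_{i=1}^{2r} f(i) over all x ∈ {0,1}^{2r+1}, y ∈ {0,1}^k satisfying ∑_{i=1}^{2r+1} λ·f(i)·x_i + ∑_{t=1}^{k} ω_t·(λ+1)·y_t ≤ λ·∑_{i=1}^{2r+1} f(i) + λ². Then M = f(2r+1) + 3λ + 5 if there exists a subset T ⊆ {1,…,k} with ∑_{t∈T} ω_t = λ or ∑_{t∈T} ω_t = λ − 1, and M = f(2r+1) + 3λ + 4 otherwise. -/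
open Finset

section Helpers

variable {f : ℕ → ℕ}

lemma fib_key (hf1 : f 1 = 1) (hf2 : f 2 = 1) (hf3 : f 3 = 1)
    (hrec : ∀ i, 4 ≤ i → f i = f (i - 1) + f (i - 2)) :
    ∀ n, 1 ≤ f (n+1) ∧ f (n+1) ≤ f (n+2) := by
  intro n
  induction n with
  | zero => constructor <;> simp [hf1, hf2]
  | succ n ih =>
    rcases Nat.eq_zero_or_pos n with h0 | h0
    · subst h0
      show 1 ≤ f 2 ∧ f 2 ≤ f 3
      simp [hf2, hf3]
    have hr := hrec (n+3) (by omega)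
    simp only [show n+3-1 = n+2 from rfl, show n+3-2 = n+1 from rfl] at hr
    show 1 ≤ f (n+2) ∧ f (n+2) ≤ f (n+3)
    exact ⟨le_trans ih.1 ih.2, by omega⟩

lemma fib_mono (hf1 : f 1 = 1) (hf2 : f 2 = 1) (hf3 : f 3 = 1)
    (hrec : ∀ i, 4 ≤ i → f i = f (i - 1) + f (i - 2)) :
    ∀ a b, 1 ≤ a → a ≤ b → f a ≤ f b := by
  intro a b ha hab
  induction b, hab using Nat.le_induction with
  | base => exact le_refl _
  | succ b hb ih =>
    have h2 : f b ≤ f (b+1) := by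
      obtain ⟨c, rfl⟩ : ∃ c, b = c + 1 := ⟨b - 1, by omega⟩
      exact (fib_key hf1 hf2 hf3 hrec c).2
    exact le_trans ih h2

lemma fib_sum (hf1 : f 1 = 1) (hf2 : f 2 = 1) (hf3 : f 3 = 1)
    (hrec : ∀ i, 4 ≤ i → f i = f (i - 1) + f (i - 2)) :
    ∀ n, 1 ≤ n → ∑ i ∈ Icc 1 n, f i = f (n+2) := by
  intro n hn
  induction n with
  | zero => omega
  | succ n ih =>
    rcases Nat.eq_zero_or_pos n with h0 | h0
    · subst h0; norm_num [hf1, hf3]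
    · rw [Finset.sum_Icc_succ_top (by omega : 1 ≤ n+1), ih h0]
      have hr := hrec (n+3) (by omega)
      simp only [show n+3-1 = n+2 from rfl, show n+3-2 = n+1 from rfl] at hr
      show f (n+2) + f (n+1) = f (n+3)
      omega

lemma fib_complete (hf1 : f 1 = 1) (hf2 : f 2 = 1) (hf3 : f 3 = 1)
    (hrec : ∀ i, 4 ≤ i → f i = f (i - 1) + f (i - 2)) :
    ∀ n, ∀ A : ℕ, A ≤ ∑ i ∈ Icc 1 n, f i →
      ∃ x : ℕ → ℕ, (∀ i, x i = 0 ∨ x i = 1) ∧ ∑ i ∈ Icc 1 n, f i * x i = A := by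
  intro n
  induction n with
  | zero =>
    intro A hA
    rw [Finset.Icc_eq_empty (by omega : ¬ (1:ℕ) ≤ 0), Finset.sum_empty, Nat.le_zero] at hA
    exact ⟨fun _ => 0, fun _ => Or.inl rfl, by
      rw [Finset.Icc_eq_empty (by omega : ¬ (1:ℕ) ≤ 0), Finset.sum_empty, hA]⟩
  | succ n ih =>
    intro A hA
    rw [Finset.sum_Icc_succ_top (by omega : 1 ≤ n+1)] at hA
    by_cases hbig : f (n+1) ≤ A
    · obtain ⟨x, hx01, hxs⟩ := ih (A - f (n+1)) (by omega)
      refine ⟨fun i => if i = n+1 then 1 else x i,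
        fun i => by by_cases h : i = n+1 <;> simp [h, hx01 i], ?_⟩
      rw [Finset.sum_Icc_succ_top (by omega : 1 ≤ n+1)]
      have hcong : ∑ i ∈ Icc 1 n, f i * (if i = n+1 then 1 else x i)
          = ∑ i ∈ Icc 1 n, f i * x i := by
        apply Finset.sum_congr rfl
        intro i hi
        rw [if_neg (by simp only [Finset.mem_Icc] at hi; omega)]
      simp only [hcong, hxs]
      simp only [if_true]
      omega
    · have hle : A ≤ ∑ i ∈ Icc 1 n, f i := by
        rcases Nat.eq_zero_or_pos n with h0 | h0
        · subst h0
          simp only [Nat.zero_add, hf1] at hbig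
          omega
        · have hs := fib_sum hf1 hf2 hf3 hrec n h0
          have hk := fib_key hf1 hf2 hf3 hrec n
          omega
      obtain ⟨x, hx01, hxs⟩ := ih A hle
      refine ⟨fun i => if i = n+1 then 0 else x i,
        fun i => by by_cases h : i = n+1 <;> simp [h, hx01 i], ?_⟩
      rw [Finset.sum_Icc_succ_top (by omega : 1 ≤ n+1)]
      have hcong : ∑ i ∈ Icc 1 n, f i * (if i = n+1 then 0 else x i)
          = ∑ i ∈ Icc 1 n, f i * x i := by
        apply Finset.sum_congr rfl
        intro i hi
        rw [if_neg (by simp only [Finset.mem_Icc] at hi; omega)]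
      simp only [hcong, hxs]
      simp only [if_true]
      omega

lemma fib_grow (hf1 : f 1 = 1) (hf2 : f 2 = 1) (hf3 : f 3 = 1)
    (hrec : ∀ i, 4 ≤ i → f i = f (i - 1) + f (i - 2)) :
    ∀ m, 2^(m+1) + 1 ≤ f (2*m + 7) := by
  have h4 : f 4 = 2 := by have := hrec 4 (by norm_num); norm_num [hf2, hf3] at this; omega
  have h5 : f 5 = 3 := by have := hrec 5 (by norm_num); norm_num [hf3, h4] at this; omega
  have h6 : f 6 = 5 := by have := hrec 6 (by norm_num); norm_num [h4, h5] at this; omega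
  have h7 : f 7 = 8 := by have := hrec 7 (by norm_num); norm_num [h5, h6] at this; omega
  intro m
  induction m with
  | zero => norm_num [h7]
  | succ m ih =>
    have hr := hrec (2*m+9) (by omega)
    simp only [show 2*m+9-1 = 2*m+8 from rfl, show 2*m+9-2 = 2*m+7 from rfl] at hr
    have hmono : f (2*m+7) ≤ f (2*m+8) := (fib_key hf1 hf2 hf3 hrec (2*m+6)).2
    show 2^(m+2) + 1 ≤ f (2*m+9)
    have : 2^(m+2) = 2 * 2^(m+1) := by ring
    omega




set_option maxHeartbeats 1000000 in

/-- Reduced down-lifting problem for the final variable in the NP-hardness construction: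
its maximum value `M` equals `f (2r+1) + 3λ + 5` if some subset of the weights sums to `λ`
or `λ − 1`, and equals `f (2r+1) + 3λ + 4` otherwise. -/
theorem stmt_12 (f : ℕ → ℕ) (hf1 : f 1 = 1) (hf2 : f 2 = 1) (hf3 : f 3 = 1)
    (hrec : ∀ i, 4 ≤ i → f i = f (i - 1) + f (i - 2))
    (m r : ℕ) (hr : r = m + 6) (lam : ℤ) (hlam : lam = 2 ^ (m + 1) - 1)
    (k : ℕ) (ω : ℕ → ℤ)
    (hω : ∀ t ∈ Finset.Icc 1 k, 1 ≤ ω t ∧ ω t ≤ lam - 1)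
    (hωsum : (∑ t ∈ Finset.Icc 1 k, ω t) = 2 * lam)
    (M : ℤ)
    (hM : IsGreatest {g : ℤ | ∃ x : ℕ → ℕ, ∃ y : ℕ → ℕ,
      (∀ i ∈ Finset.Icc 1 (2 * r + 1), x i = 0 ∨ x i = 1) ∧
      (∀ t ∈ Finset.Icc 1 k, y t = 0 ∨ y t = 1) ∧
      (∑ i ∈ Finset.Icc 1 (2 * r + 1), lam * (f i : ℤ) * (x i : ℤ)) +
          (∑ t ∈ Finset.Icc 1 k, ω t * (lam + 1) * (y t : ℤ)) ≤
        lam * (∑ i ∈ Finset.Icc 1 (2 * r + 1), (f i : ℤ)) + lam ^ 2 ∧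
      g = (∑ i ∈ Finset.Icc 1 (2 * r + 1), (f i : ℤ) * (x i : ℤ)) +
          (∑ t ∈ Finset.Icc 1 k, ω t * (y t : ℤ)) + 2 * lam + 6 -
          ∑ i ∈ Finset.Icc 1 (2 * r), (f i : ℤ)} M) :
    ((∃ T ⊆ Finset.Icc 1 k, (∑ t ∈ T, ω t) = lam ∨ (∑ t ∈ T, ω t) = lam - 1) →
      M = (f (2 * r + 1) : ℤ) + 3 * lam + 5) ∧
    (¬ (∃ T ⊆ Finset.Icc 1 k, (∑ t ∈ T, ω t) = lam ∨ (∑ t ∈ T, ω t) = lam - 1) →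
      M = (f (2 * r + 1) : ℤ) + 3 * lam + 4) := by
  have hpow : (2:ℤ) ≤ 2 ^ (m+1) := le_self_pow₀ one_le_two (Nat.succ_ne_zero m)
  have hlam1 : 1 ≤ lam := by rw [hlam]; linarith
  have hk1 : 1 ≤ k := by
    by_contra hk
    obtain rfl : k = 0 := by omega
    rw [Finset.Icc_eq_empty (by omega : ¬ (1:ℕ) ≤ 0), Finset.sum_empty] at hωsum
    omega
  have hlam2 : 2 ≤ lam := by
    have h1 := hω 1 (Finset.mem_Icc.mpr ⟨le_refl 1, hk1⟩)
    omega
  have hsum1 : ∑ i ∈ Finset.Icc 1 (2*r+1), f i = f (2*r+3) :=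
    fib_sum hf1 hf2 hf3 hrec (2*r+1) (by omega)
  have hsum2 : ∑ i ∈ Finset.Icc 1 (2*r), f i = f (2*r+2) :=
    fib_sum hf1 hf2 hf3 hrec (2*r) (by omega)
  have hrel : f (2*r+3) = f (2*r+2) + f (2*r+1) := by
    have h := hrec (2*r+3) (by omega)
    simpa only [show 2*r+3-1 = 2*r+2 from rfl, show 2*r+3-2 = 2*r+1 from rfl] using h
  have hS1 : ∑ i ∈ Finset.Icc 1 (2*r+1), (f i : ℤ) = (f (2*r+3) : ℤ) := by
    rw [← Nat.cast_sum]; exact_mod_cast hsum1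
  have hS2 : ∑ i ∈ Finset.Icc 1 (2*r), (f i : ℤ) = (f (2*r+2) : ℤ) := by
    rw [← Nat.cast_sum]; exact_mod_cast hsum2
  have hrelZ : (f (2*r+3) : ℤ) = (f (2*r+2) : ℤ) + (f (2*r+1) : ℤ) := by exact_mod_cast hrel
  have hgrow : 2^(m+1) + 1 ≤ f (2*r+3) := by
    have h1 := fib_grow hf1 hf2 hf3 hrec m
    have h2 := fib_mono hf1 hf2 hf3 hrec (2*m+7) (2*r+3) (by omega) (by omega)
    omega
  have keyx : ∀ x : ℕ → ℕ, ∑ i ∈ Finset.Icc 1 (2*r+1), lam * (f i:ℤ) * (x i:ℤ)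
      = lam * ∑ i ∈ Finset.Icc 1 (2*r+1), (f i:ℤ) * (x i:ℤ) := by
    intro x; rw [Finset.mul_sum]; exact Finset.sum_congr rfl fun i _ => by ring
  have keyy : ∀ y : ℕ → ℕ, ∑ t ∈ Finset.Icc 1 k, ω t * (lam+1) * (y t:ℤ)
      = (lam+1) * ∑ t ∈ Finset.Icc 1 k, ω t * (y t:ℤ) := by
    intro y; rw [Finset.mul_sum]; exact Finset.sum_congr rfl fun t _ => by ring
  -- generic lower-bound helper
  have hmem : ∀ (a : ℕ) (y : ℕ → ℕ) (Bv : ℤ), a ≤ f (2*r+3) →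
      (∀ t ∈ Finset.Icc 1 k, y t = 0 ∨ y t = 1) →
      (∑ t ∈ Finset.Icc 1 k, ω t * (y t : ℤ)) = Bv →
      lam * (a:ℤ) + (lam+1) * Bv ≤ lam * (f (2*r+3):ℤ) + lam^2 →
      (a:ℤ) + Bv + 2*lam + 6 - (f (2*r+2):ℤ) ≤ M := by
    intro a y Bv ha hy01 hyB hconB
    apply hM.2
    obtain ⟨x, hx01, hxs⟩ := fib_complete hf1 hf2 hf3 hrec (2*r+1) a (by rw [hsum1]; exact ha)
    have hxsZ : ∑ i ∈ Finset.Icc 1 (2*r+1), (f i:ℤ) * (x i:ℤ) = (a:ℤ) := by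
      have h1 : ∑ i ∈ Finset.Icc 1 (2*r+1), (f i:ℤ) * (x i:ℤ)
          = ((∑ i ∈ Finset.Icc 1 (2*r+1), f i * x i : ℕ) : ℤ) := by
        push_cast; rfl
      rw [h1, hxs]
    simp only [Set.mem_setOf_eq]
    refine ⟨x, y, fun i _ => hx01 i, hy01, ?_, ?_⟩
    · rw [keyx, keyy, hS1, hxsZ, hyB]
      exact hconB
    · rw [hxsZ, hyB, hS2]
  -- lower bound 4
  have haZ : ((f (2*r+3) - (2^(m+1)+1) : ℕ) : ℤ) = (f (2*r+3):ℤ) - (lam+2) := by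
    rw [Nat.cast_sub hgrow]; push_cast; rw [hlam]; ring
  have hlow4 : (f (2*r+1):ℤ) + 3*lam + 4 ≤ M := by
    have h := hmem (f (2*r+3) - (2^(m+1)+1)) (fun _ => 1) (2*lam) (by omega)
      (fun t _ => Or.inr rfl) (by simpa using hωsum) (by rw [haZ]; nlinarith [hlam1])
    rw [haZ] at h
    linarith [hrelZ]
  -- lower bound 5
  have hlow5 : (∃ T ⊆ Finset.Icc 1 k, (∑ t ∈ T, ω t) = lam ∨ (∑ t ∈ T, ω t) = lam - 1) →
      (f (2*r+1):ℤ) + 3*lam + 5 ≤ M := by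
    rintro ⟨T, hT, hTsum⟩
    have hy01 : ∀ t ∈ Finset.Icc 1 k, (if t ∈ T then (1:ℕ) else 0) = 0 ∨ (if t ∈ T then (1:ℕ) else 0) = 1 := by
      intro t _; by_cases h : t ∈ T <;> simp [h]
    have hyB : ∑ t ∈ Finset.Icc 1 k, ω t * (((if t ∈ T then (1:ℕ) else 0) : ℕ) : ℤ)
        = ∑ t ∈ T, ω t := by
      calc ∑ t ∈ Finset.Icc 1 k, ω t * (((if t ∈ T then (1:ℕ) else 0) : ℕ) : ℤ)
          = ∑ t ∈ Finset.Icc 1 k, (if t ∈ T then ω t else 0) := by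
            apply Finset.sum_congr rfl
            intro t _
            by_cases h : t ∈ T <;> simp [h]
        _ = ∑ t ∈ Finset.Icc 1 k ∩ T, ω t := Finset.sum_ite_mem _ _ _
        _ = ∑ t ∈ T, ω t := by rw [Finset.inter_eq_right.mpr hT]
    rcases hTsum with hTs | hTs
    · have h := hmem (f (2*r+3) - 1) (fun t => if t ∈ T then 1 else 0) lam (by omega)
        hy01 (by rw [hyB, hTs]) ?_
      · have haZ1 : ((f (2*r+3) - 1 : ℕ) : ℤ) = (f (2*r+3):ℤ) - 1 := by
          rw [Nat.cast_sub (by omega)]; push_cast; ring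
        rw [haZ1] at h
        linarith [hrelZ]
      · have haZ1 : ((f (2*r+3) - 1 : ℕ) : ℤ) = (f (2*r+3):ℤ) - 1 := by
          rw [Nat.cast_sub (by omega)]; push_cast; ring
        rw [haZ1]; nlinarith [hlam1]
    · have h := hmem (f (2*r+3)) (fun t => if t ∈ T then 1 else 0) (lam - 1) (le_refl _)
        hy01 (by rw [hyB, hTs]) (by nlinarith [hlam1])
      linarith [hrelZ]
  -- upper bounds
  obtain ⟨x, y, hx01, hy01, hcon, hMeq⟩ := hM.1
  rw [keyx, keyy, hS1] at hcon
  rw [hS2] at hMeq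
  obtain ⟨A, hAdef⟩ : ∃ A, A = ∑ i ∈ Finset.Icc 1 (2*r+1), (f i:ℤ) * (x i:ℤ) := ⟨_, rfl⟩
  obtain ⟨B, hBdef⟩ : ∃ B, B = ∑ t ∈ Finset.Icc 1 k, ω t * (y t:ℤ) := ⟨_, rfl⟩
  rw [← hAdef, ← hBdef] at hcon hMeq
  have hA0 : 0 ≤ A := by
    rw [hAdef]
    exact Finset.sum_nonneg fun i _ => by positivity
  have hAS : A ≤ (f (2*r+3):ℤ) := by
    rw [hAdef, ← hS1]
    apply Finset.sum_le_sum
    intro i hi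
    rcases hx01 i hi with h | h <;> simp [h]
  have hB0 : 0 ≤ B := by
    rw [hBdef]
    apply Finset.sum_nonneg
    intro t ht
    have h1 := (hω t ht).1
    positivity
  have hB2 : B ≤ 2*lam := by
    rw [hBdef, ← hωsum]
    apply Finset.sum_le_sum
    intro t ht
    have h1 := (hω t ht).1
    rcases hy01 t ht with h | h <;> simp [h] <;> linarith
  have hBsub : ∃ T ⊆ Finset.Icc 1 k, (∑ t ∈ T, ω t) = B := by
    refine ⟨(Finset.Icc 1 k).filter (fun t => y t = 1), Finset.filter_subset _ _, ?_⟩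
    rw [Finset.sum_filter, hBdef]
    apply Finset.sum_congr rfl
    intro t ht
    rcases hy01 t ht with h | h <;> simp [h]
  have hub5 : A + B ≤ (f (2*r+3):ℤ) + lam - 1 := by
    rcases le_or_gt B 0 with h | h
    · linarith
    · by_contra hcc
      push_neg at hcc
      have hmul := mul_le_mul_of_nonneg_left
        (show (f (2*r+3):ℤ) + lam ≤ A + B by linarith) (by linarith : (0:ℤ) ≤ lam)
      nlinarith [hcon]
  constructor
  · intro hex
    have h5 := hlow5 hex
    have hup : M ≤ (f (2*r+1):ℤ) + 3*lam + 5 := by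
      rw [hMeq]; linarith [hub5, hrelZ]
    linarith
  · intro hno
    obtain ⟨T, hT, hTB⟩ := hBsub
    have hBne1 : B ≠ lam := fun h => hno ⟨T, hT, Or.inl (hTB.trans h)⟩
    have hBne2 : B ≠ lam - 1 := fun h => hno ⟨T, hT, Or.inr (hTB.trans h)⟩
    have hub4 : A + B ≤ (f (2*r+3):ℤ) + lam - 2 := by
      rcases le_or_gt B 0 with h | h
      · linarith
      · rcases le_or_gt B lam with h2 | h2
        · have hB2' : B ≤ lam - 2 := by omega
          linarith
        · by_contra hcc
          push_neg at hcc
          have hmul := mul_le_mul_of_nonneg_left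
            (show (f (2*r+3):ℤ) + lam - 1 ≤ A + B by linarith) (by linarith : (0:ℤ) ≤ lam)
          nlinarith [hcon]
    have hup : M ≤ (f (2*r+1):ℤ) + 3*lam + 4 := by
      rw [hMeq]; linarith [hrelZ]
    linarith [hlow4]




end Helpers
end
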